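/- For n ∈ ℕ, let a n be the number of binary strings of length n that do not contain the substring '111'. Then for every real y with |y| < 1/2, the series ∑_n a n · y^n converges and its sum equals (1 + y + y²)/(y³ + (1 − 2y)·(1 + y + y²)). -/

import Mathlib

def NT3 (n : ℕ) : Set (List Bool) :=
  {l : List Bool | l.length = n ∧ ¬ [true, true, true] <:+: l}

lemma NT3_finite (n : ℕ) : (NT3 n).Finite :=
  (List.finite_length_eq Bool n).subset fun _ hl => hl.1

lemma no111_tail {b : Bool} {l : List Bool}
    (h : ¬ [true, true, true] <:+: b :: l) : ¬ [true, true, true] <:+: l :=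
  fun hi => h (hi.trans (List.suffix_cons b l).isInfix)

lemma no111_false {l : List Bool}
    (h : ¬ [true, true, true] <:+: l) : ¬ [true, true, true] <:+: false :: l := by
  rw [List.infix_cons_iff]
  rintro (hp | hi)
  · simp [List.cons_prefix_cons] at hp
  · exact h hi

lemma no111_tf {l : List Bool}
    (h : ¬ [true, true, true] <:+: l) :
    ¬ [true, true, true] <:+: true :: false :: l := by
  rw [List.infix_cons_iff]
  rintro (hp | hi)
  · simp [List.cons_prefix_cons] at hp
  · exact no111_false h hi

lemma no111_ttf {l : List Bool}
    (h : ¬ [true, true, true] <:+: l) :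
    ¬ [true, true, true] <:+: true :: true :: false :: l := by
  rw [List.infix_cons_iff]
  rintro (hp | hi)
  · simp [List.cons_prefix_cons] at hp
  · exact no111_tf h hi

lemma NT3_decomp (n : ℕ) :
    NT3 (n + 3) =
      (fun l => false :: l) '' NT3 (n + 2) ∪
      (fun l => true :: false :: l) '' NT3 (n + 1) ∪
      (fun l => true :: true :: false :: l) '' NT3 n := by
  ext l
  constructor
  · rintro ⟨hlen, hni⟩
    rcases l with _ | ⟨b0, _ | ⟨b1, _ | ⟨b2, t⟩⟩⟩ <;> simp at hlen
    cases b0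
    · exact Or.inl (Or.inl ⟨b1 :: b2 :: t, ⟨by simpa using hlen, no111_tail hni⟩, rfl⟩)
    · cases b1
      · exact Or.inl (Or.inr ⟨b2 :: t, ⟨by simpa using hlen, no111_tail (no111_tail hni)⟩, rfl⟩)
      · cases b2
        · exact Or.inr ⟨t, ⟨by simpa using hlen,
            no111_tail (no111_tail (no111_tail hni))⟩, rfl⟩
        · exact absurd ⟨[], t, rfl⟩ hni
  · rintro ((⟨s, ⟨hs1, hs2⟩, rfl⟩ | ⟨s, ⟨hs1, hs2⟩, rfl⟩) | ⟨s, ⟨hs1, hs2⟩, rfl⟩)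
    · exact ⟨by simp [hs1], no111_false hs2⟩
    · exact ⟨by simp [hs1], no111_tf hs2⟩
    · exact ⟨by simp [hs1], no111_ttf hs2⟩

lemma NT3_rec (n : ℕ) :
    (NT3 (n + 3)).ncard = (NT3 (n + 2)).ncard + (NT3 (n + 1)).ncard + (NT3 n).ncard := by
  have hinj1 : Function.Injective (fun l : List Bool => false :: l) :=
    fun a b h => by simpa using h
  have hinj2 : Function.Injective (fun l : List Bool => true :: false :: l) :=
    fun a b h => by simpa using h
  have hinj3 : Function.Injective (fun l : List Bool => true :: true :: false :: l) :=
    fun a b h => by simpa using h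
  have hd12 : Disjoint ((fun l : List Bool => false :: l) '' NT3 (n + 2))
      ((fun l : List Bool => true :: false :: l) '' NT3 (n + 1)) := by
    rw [Set.disjoint_left]
    rintro x ⟨s, _, rfl⟩ ⟨u, _, h⟩
    simp at h
  have hd3 : Disjoint
      ((fun l : List Bool => false :: l) '' NT3 (n + 2) ∪
        (fun l : List Bool => true :: false :: l) '' NT3 (n + 1))
      ((fun l : List Bool => true :: true :: false :: l) '' NT3 n) := by
    rw [Set.disjoint_left]
    rintro x (⟨s, _, rfl⟩ | ⟨s, _, rfl⟩) ⟨u, _, h⟩ <;> simp at h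
  rw [NT3_decomp, Set.ncard_union_eq hd3
      (((NT3_finite (n+2)).image _).union ((NT3_finite (n+1)).image _))
      ((NT3_finite n).image _),
    Set.ncard_union_eq hd12 ((NT3_finite (n+2)).image _) ((NT3_finite (n+1)).image _),
    Set.ncard_image_of_injective _ hinj1, Set.ncard_image_of_injective _ hinj2,
    Set.ncard_image_of_injective _ hinj3]

lemma NT3_zero : (NT3 0).ncard = 1 := by
  have : NT3 0 = {[]} := by
    ext l
    simp only [NT3, Set.mem_setOf_eq, List.length_eq_zero_iff, Set.mem_singleton_iff]
    constructor
    · rintro ⟨rfl, _⟩; rfl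
    · rintro rfl; exact ⟨rfl, by decide⟩
  rw [this, Set.ncard_singleton]

lemma NT3_one : (NT3 1).ncard = 2 := by
  have : NT3 1 = {[false], [true]} := by
    ext l
    simp only [NT3, Set.mem_setOf_eq, Set.mem_insert_iff, Set.mem_singleton_iff]
    constructor
    · rintro ⟨hlen, _⟩
      rcases l with _ | ⟨b, _ | t⟩ <;> simp at hlen
      cases b
      · exact Or.inl rfl
      · exact Or.inr rfl
    · rintro (rfl | rfl) <;> exact ⟨rfl, by decide⟩
  rw [this, Set.ncard_pair (by simp)]

lemma NT3_two : (NT3 2).ncard = 4 := by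
  have : NT3 2 = (({[false, false], [false, true], [true, false], [true, true]} :
      Finset (List Bool)) : Set (List Bool)) := by
    ext l
    simp only [NT3, Set.mem_setOf_eq, Finset.coe_insert, Finset.coe_singleton,
      Set.mem_insert_iff, Set.mem_singleton_iff]
    constructor
    · rintro ⟨hlen, _⟩
      rcases l with _ | ⟨b0, _ | ⟨b1, _ | t⟩⟩ <;> simp at hlen
      cases b0 <;> cases b1 <;> simp
    · rintro (rfl | rfl | rfl | rfl) <;> exact ⟨rfl, by decide⟩
  rw [this, Set.ncard_coe_finset]
  decide

theorem genfun_no_triple_one (a : ℕ → ℕ)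
    (ha : ∀ n : ℕ, a n =
      Set.ncard {l : List Bool | l.length = n ∧ ¬ [true, true, true] <:+: l})
    (y : ℝ) (hy : |y| < 1 / 2) :
    HasSum (fun n : ℕ => (a n : ℝ) * y ^ n)
      ((1 + y + y ^ 2) / (y ^ 3 + (1 - 2 * y) * (1 + y + y ^ 2))) := by
  have h0 : a 0 = 1 := (ha 0).trans NT3_zero
  have h1 : a 1 = 2 := (ha 1).trans NT3_one
  have h2 : a 2 = 4 := (ha 2).trans NT3_two
  have hrec : ∀ n, a (n + 3) = a (n + 2) + a (n + 1) + a n := fun n => by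
    rw [ha, ha, ha, ha]; exact NT3_rec n
  -- growth bound
  have hbound : ∀ n, a n ≤ 2 ^ n := by
    intro n
    induction n using Nat.strong_induction_on with
    | _ n ih =>
      match n with
      | 0 => simp [h0]
      | 1 => simp [h1]
      | 2 => rw [h2]; norm_num
      | (m + 3) =>
        rw [hrec m]
        have i2 := ih (m + 2) (by omega)
        have i1 := ih (m + 1) (by omega)
        have i0 := ih m (by omega)
        have : 2 ^ (m + 2) + 2 ^ (m + 1) + 2 ^ m ≤ 2 ^ (m + 3) := by ring_nf; omega
        omega
  set f : ℕ → ℝ := fun n => (a n : ℝ) * y ^ n with hf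
  have hsum : Summable f := by
    apply Summable.of_norm_bounded (g := fun n => (2 * |y|) ^ n)
      (summable_geometric_of_lt_one (by positivity) (by linarith [abs_nonneg y]))
    intro n
    have : ‖f n‖ = (a n : ℝ) * |y| ^ n := by
      simp [hf, abs_mul, abs_pow]
    rw [this, mul_pow]
    gcongr
    exact_mod_cast hbound n
  set S : ℝ := ∑' n, f n with hS
  have hs3 : Summable fun n => f (n + 3) := (summable_nat_add_iff 3).mpr hsum
  have hs2 : Summable fun n => f (n + 2) := (summable_nat_add_iff 2).mpr hsum
  have hs1 : Summable fun n => f (n + 1) := (summable_nat_add_iff 1).mpr hsum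
  have e3 : (∑ i ∈ Finset.range 3, f i) + ∑' n, f (n + 3) = S := hsum.sum_add_tsum_nat_add 3
  have e2 : (∑ i ∈ Finset.range 2, f i) + ∑' n, f (n + 2) = S := hsum.sum_add_tsum_nat_add 2
  have e1 : (∑ i ∈ Finset.range 1, f i) + ∑' n, f (n + 1) = S := hsum.sum_add_tsum_nat_add 1
  have hshift : (∑' n, f (n + 3)) =
      y * (∑' n, f (n + 2)) + y ^ 2 * (∑' n, f (n + 1)) + y ^ 3 * S := by
    rw [hS, ← tsum_mul_left, ← tsum_mul_left, ← tsum_mul_left,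
      ← Summable.tsum_add (hs2.mul_left y) (hs1.mul_left (y ^ 2)),
      ← Summable.tsum_add ((hs2.mul_left y).add (hs1.mul_left (y ^ 2))) (hsum.mul_left (y ^ 3))]
    apply tsum_congr
    intro n
    have : f (n + 3) = ((a (n + 2) : ℝ) + a (n + 1) + a n) * y ^ (n + 3) := by
      rw [hf]; push_cast [hrec n]; ring
    rw [this, hf]
    push_cast
    ring
  have hf0 : f 0 = 1 := by simp [hf, h0]
  have hf1 : f 1 = 2 * y := by simp [hf, h1]
  have hf2 : f 2 = 4 * y ^ 2 := by simp [hf, h2]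
  rw [Finset.sum_range_succ, Finset.sum_range_succ, Finset.sum_range_one, hf0, hf1, hf2] at e3
  rw [Finset.sum_range_succ, Finset.sum_range_one, hf0, hf1] at e2
  rw [Finset.sum_range_one, hf0] at e1
  have habs := abs_lt.mp hy
  have hd : y ^ 3 + (1 - 2 * y) * (1 + y + y ^ 2) ≠ 0 := by
    nlinarith [habs.1, habs.2, sq_nonneg y, sq_nonneg (y + 1/2), sq_nonneg (y - 1/2)]
  have hSval : S = (1 + y + y ^ 2) / (y ^ 3 + (1 - 2 * y) * (1 + y + y ^ 2)) := by
    rw [eq_div_iff hd]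
    linear_combination (-1 : ℝ) * e3 + hshift + y * e2 + y ^ 2 * e1
  have := hsum.hasSum
  rwa [← hS, hSval] at this
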